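/- If ξ₁(β) ≤ C < βu₀/r, then the function f_C(z) = βu₀/r - (βu₀/r - C)/(e^{θ₁(u₀)d} + (θ₁(u₀)/θ₂(u₀))e^{-θ₂(u₀)d}) · (e^{θ₁(u₀)z} + (θ₁(u₀)/θ₂(u₀))e^{-θ₂(u₀)z}) satisfies -r f_C(z) - (μ-u₀) f_C'(z) + (σ²/2) f_C''(z) + βu₀ = 0, f_C'(0) = 0, f_C(d) = C, and f_C'(z) ≥ -β for all z ∈ [0,d]. -/

import Mathlib

open Real Set

noncomputable def th1 (μ σ r u : ℝ) : ℝ := (Real.sqrt ((μ - u)^2 + 2*r*σ^2) + (μ - u)) / σ^2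
noncomputable def th2 (μ σ r u : ℝ) : ℝ := (Real.sqrt ((μ - u)^2 + 2*r*σ^2) - (μ - u)) / σ^2

noncomputable def xi1 (μ σ r d u₀ β : ℝ) : ℝ :=
  β * u₀ / r - β * (Real.exp (th1 μ σ r u₀ * d) + th1 μ σ r u₀ / th2 μ σ r u₀ * Real.exp (-(th2 μ σ r u₀) * d)) /
    (th1 μ σ r u₀ * (Real.exp (th1 μ σ r u₀ * d) - Real.exp (-(th2 μ σ r u₀) * d)))

noncomputable def fC (μ σ r d u₀ β C z : ℝ) : ℝ :=
  β * u₀ / r - (β * u₀ / r - C) /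
      (Real.exp (th1 μ σ r u₀ * d) + th1 μ σ r u₀ / th2 μ σ r u₀ * Real.exp (-(th2 μ σ r u₀) * d)) *
    (Real.exp (th1 μ σ r u₀ * z) + th1 μ σ r u₀ / th2 μ σ r u₀ * Real.exp (-(th2 μ σ r u₀) * z))

set_option maxHeartbeats 1600000 in
theorem stmt11 (μ σ r d u₀ β C : ℝ) (hσ : 0 < σ) (hr : 0 < r) (hd : 0 < d) (hu₀ : 0 < u₀)
    (hβ : 0 < β) (hC1 : xi1 μ σ r d u₀ β ≤ C) (hC2 : C < β * u₀ / r) :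
    (∀ z ∈ Set.Icc 0 d,
      -r * fC μ σ r d u₀ β C z - (μ - u₀) * deriv (fC μ σ r d u₀ β C) z
        + σ^2/2 * deriv (deriv (fC μ σ r d u₀ β C)) z + β * u₀ = 0) ∧
    deriv (fC μ σ r d u₀ β C) 0 = 0 ∧
    fC μ σ r d u₀ β C d = C ∧
    (∀ z ∈ Set.Icc 0 d, deriv (fC μ σ r d u₀ β C) z ≥ -β) := by
  have hσ2 : (0:ℝ) < σ^2 := by positivity
  set m : ℝ := μ - u₀ with hm
  set s : ℝ := Real.sqrt (m^2 + 2*r*σ^2) with hs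
  have hs2 : s^2 = m^2 + 2*r*σ^2 := Real.sq_sqrt (by positivity)
  have hs0 : 0 ≤ s := Real.sqrt_nonneg _
  set a : ℝ := th1 μ σ r u₀ with ha
  set b : ℝ := th2 μ σ r u₀ with hb
  have ha' : a = (s + m) / σ^2 := rfl
  have hb' : b = (s - m) / σ^2 := rfl
  have hapos : 0 < a := by
    rw [ha']
    apply div_pos _ hσ2
    nlinarith [sq_nonneg (s + m)]
  have hbpos : 0 < b := by
    rw [hb']
    apply div_pos _ hσ2
    nlinarith [sq_nonneg (s - m)]
  -- quadratic identities
  have hqa : σ^2/2 * a^2 - m * a - r = 0 := by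
    rw [ha']; field_simp; nlinarith [hs2]
  have hqb : σ^2/2 * b^2 + m * b - r = 0 := by
    rw [hb']; field_simp; nlinarith [hs2]
  set K : ℝ := β * u₀ / r with hK
  set D : ℝ := Real.exp (a * d) + a / b * Real.exp (-b * d) with hD
  have hDpos : 0 < D := by positivity
  set A : ℝ := (K - C) / D with hA
  have hApos : 0 < A := div_pos (by linarith) hDpos
  have hfC : fC μ σ r d u₀ β C = fun z => K - A * (Real.exp (a * z) + a / b * Real.exp (-b * z)) := rfl
  -- first derivative
  have hd1 : ∀ z : ℝ, HasDerivAt (fC μ σ r d u₀ β C)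
      (-A * (a * Real.exp (a * z) - a * Real.exp (-b * z))) z := by
    intro z
    rw [hfC]
    have h1 : HasDerivAt (fun z : ℝ => Real.exp (a * z)) (Real.exp (a * z) * a) z := by
      simpa using ((hasDerivAt_id z).const_mul a).exp
    have h2 : HasDerivAt (fun z : ℝ => Real.exp (-b * z)) (Real.exp (-b * z) * (-b)) z := by
      simpa using ((hasDerivAt_id z).const_mul (-b)).exp
    have := ((h1.add (h2.const_mul (a / b))).const_mul A).const_sub K
    refine this.congr_deriv ?_
    field_simp
    ring
  have hderiv : deriv (fC μ σ r d u₀ β C)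
      = fun z => -A * (a * Real.exp (a * z) - a * Real.exp (-b * z)) := by
    funext z; exact (hd1 z).deriv
  -- second derivative
  have hd2 : ∀ z : ℝ, HasDerivAt (fun z => -A * (a * Real.exp (a * z) - a * Real.exp (-b * z)))
      (-A * (a^2 * Real.exp (a * z) + a * b * Real.exp (-b * z))) z := by
    intro z
    have h1 : HasDerivAt (fun z : ℝ => Real.exp (a * z)) (Real.exp (a * z) * a) z := by
      simpa using ((hasDerivAt_id z).const_mul a).exp
    have h2 : HasDerivAt (fun z : ℝ => Real.exp (-b * z)) (Real.exp (-b * z) * (-b)) z := by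
      simpa using ((hasDerivAt_id z).const_mul (-b)).exp
    have := ((h1.const_mul a).sub (h2.const_mul a)).const_mul (-A)
    refine this.congr_deriv ?_
    ring
  have hderiv2 : deriv (deriv (fC μ σ r d u₀ β C))
      = fun z => -A * (a^2 * Real.exp (a * z) + a * b * Real.exp (-b * z)) := by
    rw [hderiv]; funext z; exact (hd2 z).deriv
  have hrK : r * K = β * u₀ := by rw [hK]; field_simp
  have hab : b * (a / b) = a := by field_simp
  have hxi : K - β * D / (a * (Real.exp (a * d) - Real.exp (-b * d))) ≤ C := hC1
  clear_value A D K a b s m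
  refine ⟨?_, ?_, ?_, ?_⟩
  · intro z _
    rw [hderiv2, hderiv, hfC]
    beta_reduce
    linear_combination (-1 : ℝ) * hrK + (-A * Real.exp (a*z)) * hqa
      + (-A * Real.exp (-b*z) * (a/b)) * hqb
      + (A * Real.exp (-b*z) * (m + σ^2/2*b)) * hab
  · rw [hderiv]; norm_num
  · rw [hfC]
    show K - A * (Real.exp (a * d) + a / b * Real.exp (-b * d)) = C
    rw [← hD, hA]
    field_simp
    ring
  · intro z hz
    rw [hderiv]
    beta_reduce
    obtain ⟨hz0, hzd⟩ := hz
    set E : ℝ := Real.exp (a * d) - Real.exp (-b * d) with hE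
    have hEpos : 0 < E := by
      rw [hE]
      have : -b * d < a * d := by linarith [mul_pos hbpos hd, mul_pos hapos hd]
      linarith [Real.exp_lt_exp.mpr this]
    have hkey : (K - C) * (a * E) ≤ β * D :=
      (le_div_iff₀ (mul_pos hapos hEpos)).mp (by linarith)
    have hmono : Real.exp (a * z) - Real.exp (-b * z) ≤ E := by
      rw [hE]
      have h1 : Real.exp (a * z) ≤ Real.exp (a * d) :=
        Real.exp_le_exp.mpr (mul_le_mul_of_nonneg_left hzd hapos.le)
      have h2 : Real.exp (-b * d) ≤ Real.exp (-b * z) := by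
        have : b * z ≤ b * d := mul_le_mul_of_nonneg_left hzd hbpos.le
        exact Real.exp_le_exp.mpr (by linarith)
      linarith
    have hnn : 0 ≤ Real.exp (a * z) - Real.exp (-b * z) := by
      have : -b * z ≤ a * z := by
        linarith [mul_nonneg hapos.le hz0, mul_nonneg hbpos.le hz0]
      linarith [Real.exp_le_exp.mpr this]
    have hAle : A * (a * E) ≤ β := by
      rw [hA, div_mul_eq_mul_div, div_le_iff₀ hDpos]
      exact hkey
    linarith [mul_le_mul_of_nonneg_left hmono (mul_nonneg hApos.le hapos.le), hAle]
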